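/- Let $p,d,K>0$, $a\in(1/2,1)$, let $(\bar v_1,\bar v_2)$ be the positive equilibrium of the system $v_1' = (\tfrac{2a}{1+Kv_2}-1)p v_1$, $v_2' = 2(1-\tfrac{a}{1+Kv_2})p v_1 - d v_2$, and define $G(v_2) = 2(1 - \tfrac{a}{1+Kv_2})$ and $V(v_1,v_2) = \tfrac{1}{pG(\bar v_2)}(\tfrac{v_1}{\bar v_1} - 1 - \ln\tfrac{v_1}{\bar v_1}) + \tfrac{1}{d}(\tfrac{v_2}{\bar v_2} - 1 - \tfrac{1}{\bar v_2}\int_{\bar v_2}^{v_2}\tfrac{G(\bar v_2)}{G(\xi)}d\xi)$. Then along any solution $(v_1(t),v_2(t))$ with $v_1(t),v_2(t)>0$, $\tfrac{d}{dt}V(v_1(t),v_2(t)) \le 0$. -/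

import Mathlib

set_option maxHeartbeats 1000000


open intervalIntegral

theorem lyapunov_decreasing
    (p d K a : ℝ) (hp : 0 < p) (hd : 0 < d) (hK : 0 < K)
    (ha : a ∈ Set.Ioo (1/2 : ℝ) 1)
    (vbar1 vbar2 : ℝ)
    (hv2 : vbar2 = (2 * a - 1) / K)
    (hv1 : vbar1 = d * vbar2 * (1 + K * vbar2) / (2 * p * (1 + K * vbar2 - a)))
    (G : ℝ → ℝ) (hG : ∀ y, G y = 2 * (1 - a / (1 + K * y)))
    (V : ℝ → ℝ → ℝ)
    (hV : ∀ v1 v2, V v1 v2 =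
      (1 / (p * G vbar2)) * (v1 / vbar1 - 1 - Real.log (v1 / vbar1))
      + (1 / d) * (v2 / vbar2 - 1
          - (1 / vbar2) * ∫ ξ in vbar2..v2, G vbar2 / G ξ))
    (v1 v2 : ℝ → ℝ)
    (hpos1 : ∀ t ≥ (0:ℝ), 0 < v1 t) (hpos2 : ∀ t ≥ (0:ℝ), 0 < v2 t)
    (heq1 : ∀ t ≥ (0:ℝ),
      HasDerivAt v1 ((2 * a / (1 + K * v2 t) - 1) * p * v1 t) t)
    (heq2 : ∀ t ≥ (0:ℝ),
      HasDerivAt v2 (2 * (1 - a / (1 + K * v2 t)) * p * v1 t - d * v2 t) t) :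
    ∀ t ≥ (0:ℝ), ∃ D ≤ (0:ℝ), HasDerivAt (fun s => V (v1 s) (v2 s)) D t := by
  obtain ⟨ha1, ha2⟩ := ha
  have ha0 : (0:ℝ) < a := by linarith
  have hvbar2 : 0 < vbar2 := by
    rw [hv2]; apply div_pos <;> linarith
  have h2a : 1 + K * vbar2 = 2 * a := by
    rw [hv2]; field_simp; ring
  have hGbar : G vbar2 = 1 := by
    rw [hG, h2a]; field_simp; ring
  have hrel : p * vbar1 = d * vbar2 := by
    have hden : 2 * p * (2 * a - a) ≠ 0 := by
      have : 0 < 2 * p * (2 * a - a) := by nlinarith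
      exact this.ne'
    rw [hv1, h2a, ← mul_div_assoc, div_eq_iff hden]
    ring
  have hvbar1 : 0 < vbar1 := by
    nlinarith [mul_pos hd hvbar2]
  have hvb1' : vbar1 = d * vbar2 / p := by
    rw [eq_div_iff hp.ne']; linarith [hrel]
  -- positivity of G on positives
  have hGpos : ∀ z : ℝ, 0 < z → 0 < 2 * (1 - a / (1 + K * z)) := by
    intro z hz
    have hQz : 0 < 1 + K * z := by nlinarith
    have : a / (1 + K * z) < 1 := by rw [div_lt_one hQz]; nlinarith
    linarith
  have hGcont : ContinuousOn (fun ξ => G vbar2 / G ξ) (Set.Ioi 0) := by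
    have hfeq : (fun ξ => G vbar2 / G ξ)
        = fun ξ => G vbar2 / (2 * (1 - a / (1 + K * ξ))) := by
      funext ξ; rw [hG ξ]
    rw [hfeq]
    intro z hz
    have hz' : (0:ℝ) < z := hz
    have hQz : 0 < 1 + K * z := by nlinarith
    have hGz : 0 < 2 * (1 - a / (1 + K * z)) := hGpos z hz'
    refine ContinuousAt.continuousWithinAt ?_
    refine ContinuousAt.div continuousAt_const ?_ hGz.ne'
    exact continuousAt_const.mul (continuousAt_const.sub
      (ContinuousAt.div continuousAt_const (by fun_prop) hQz.ne'))
  intro t ht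
  have hx := hpos1 t ht
  have hy := hpos2 t ht
  have hd1 := heq1 t ht
  have hd2 := heq2 t ht
  have hQ : 0 < 1 + K * v2 t := by nlinarith
  have hGy : 0 < 2 * (1 - a / (1 + K * v2 t)) := hGpos _ hy
  -- FTC for the integral term
  have hInt : IntervalIntegrable (fun ξ => G vbar2 / G ξ)
      MeasureTheory.volume vbar2 (v2 t) := by
    apply (hGcont.mono ?_).intervalIntegrable
    intro z hz
    rw [Set.mem_uIcc] at hz
    simp only [Set.mem_Ioi]
    rcases hz with ⟨h1, _⟩ | ⟨h1, _⟩ <;> linarith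
  have hMeas : StronglyMeasurableAtFilter (fun ξ => G vbar2 / G ξ)
      (nhds (v2 t)) MeasureTheory.volume :=
    hGcont.stronglyMeasurableAtFilter isOpen_Ioi (v2 t) hy
  have hContAt : ContinuousAt (fun ξ => G vbar2 / G ξ) (v2 t) :=
    hGcont.continuousAt (Ioi_mem_nhds hy)
  have hFTC : HasDerivAt (fun u => ∫ ξ in vbar2..u, G vbar2 / G ξ)
      (G vbar2 / G (v2 t)) (v2 t) :=
    intervalIntegral.integral_hasDerivAt_right hInt hMeas hContAt
  have hcomp : HasDerivAt (fun s => ∫ ξ in vbar2..v2 s, G vbar2 / G ξ)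
      (G vbar2 / G (v2 t) * (2 * (1 - a / (1 + K * v2 t)) * p * v1 t - d * v2 t)) t :=
    hFTC.comp t hd2
  have hA : HasDerivAt
      (fun s => v1 s / vbar1 - 1 - Real.log (v1 s / vbar1))
      (((2 * a / (1 + K * v2 t) - 1) * p * v1 t) / vbar1
        - (((2 * a / (1 + K * v2 t) - 1) * p * v1 t) / vbar1) / (v1 t / vbar1)) t := by
    have h1 : HasDerivAt (fun s => v1 s / vbar1)
        (((2 * a / (1 + K * v2 t) - 1) * p * v1 t) / vbar1) t := hd1.div_const _
    exact (h1.sub_const 1).sub (h1.log (div_pos hx hvbar1).ne')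
  have hB : HasDerivAt
      (fun s => v2 s / vbar2 - 1 - (1 / vbar2) * ∫ ξ in vbar2..v2 s, G vbar2 / G ξ)
      ((2 * (1 - a / (1 + K * v2 t)) * p * v1 t - d * v2 t) / vbar2
        - (1 / vbar2) * (G vbar2 / G (v2 t)
            * (2 * (1 - a / (1 + K * v2 t)) * p * v1 t - d * v2 t))) t :=
    ((hd2.div_const _).sub_const 1).sub (hcomp.const_mul _)
  have hDer : HasDerivAt (fun s => V (v1 s) (v2 s))
      ((1 / (p * G vbar2)) * (((2 * a / (1 + K * v2 t) - 1) * p * v1 t) / vbar1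
          - (((2 * a / (1 + K * v2 t) - 1) * p * v1 t) / vbar1) / (v1 t / vbar1))
        + (1 / d) * ((2 * (1 - a / (1 + K * v2 t)) * p * v1 t - d * v2 t) / vbar2
          - (1 / vbar2) * (G vbar2 / G (v2 t)
              * (2 * (1 - a / (1 + K * v2 t)) * p * v1 t - d * v2 t)))) t := by
    have hfun : (fun s => V (v1 s) (v2 s))
        = fun s => (1 / (p * G vbar2)) * (v1 s / vbar1 - 1 - Real.log (v1 s / vbar1))
          + (1 / d) * (v2 s / vbar2 - 1
              - (1 / vbar2) * ∫ ξ in vbar2..v2 s, G vbar2 / G ξ) :=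
      funext fun s => hV _ _
    rw [hfun]
    exact (hA.const_mul _).add (hB.const_mul _)
  refine ⟨_, ?_, hDer⟩
  -- prove the derivative is nonpositive
  rw [hGbar, hG (v2 t)]
  have hkey : (1 / (p * 1)) * (((2 * a / (1 + K * v2 t) - 1) * p * v1 t) / vbar1
          - (((2 * a / (1 + K * v2 t) - 1) * p * v1 t) / vbar1) / (v1 t / vbar1))
        + (1 / d) * ((2 * (1 - a / (1 + K * v2 t)) * p * v1 t - d * v2 t) / vbar2
          - (1 / vbar2) * ((1 : ℝ) / (2 * (1 - a / (1 + K * v2 t)))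
              * (2 * (1 - a / (1 + K * v2 t)) * p * v1 t - d * v2 t)))
      = -((K * (v2 t - vbar2))^2 * (K * v2 t + (2 - 2 * a)))
          / (K * vbar2 * (1 + K * v2 t)^2 * (2 * (1 - a / (1 + K * v2 t)))) := by
    rw [hvb1', hv2]
    have h2a1 : (2 * a - 1 : ℝ) ≠ 0 := by
      have : (0:ℝ) < 2 * a - 1 := by linarith
      exact this.ne'
    have hQa : (0:ℝ) < 1 + K * v2 t - a := by nlinarith
    have hs1 : 1 - a / (1 + K * v2 t) = (1 + K * v2 t - a) / (1 + K * v2 t) := by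
      field_simp
    have hs2 : 2 * a / (1 + K * v2 t) - 1 = (2 * a - (1 + K * v2 t)) / (1 + K * v2 t) := by
      field_simp
    rw [hs1, hs2]
    field_simp
    ring
  rw [hkey]
  apply div_nonpos_of_nonpos_of_nonneg
  · have h1 : 0 ≤ (K * (v2 t - vbar2))^2 := sq_nonneg _
    have h2 : 0 ≤ K * v2 t + (2 - 2 * a) := by nlinarith
    nlinarith
  · have := mul_pos (mul_pos (mul_pos hK hvbar2) (pow_pos hQ 2)) hGy
    linarith
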